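/- Let X and Y be Polish spaces (separable, completely metrizable topological spaces) equipped with their Borel σ-algebras, T : X → Y a Borel measurable map, d : Y × Y → ℝ≥0∞ a Borel measurable cost function, and a, b Borel probability measures on X. Then W(d)(T_# a, T_# b) = W(T̃d)(a, b): the infimum over couplings Δ of (T_# a, T_# b) of ∫⁻ d dΔ equals the infimum over couplings Σ of (a, b) of ∫⁻ d(T x, T x') dΣ(x,x'). -/

import Mathlib

open MeasureTheory
open scoped ENNReal

/-- The Wasserstein (Kantorovich) cost: infimum of the transport cost over all
couplings of `μ` and `ν`. -/
noncomputable def wassersteinCost {Z : Type*} [MeasurableSpace Z]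
    (c : Z × Z → ℝ≥0∞) (μ ν : Measure Z) : ℝ≥0∞ :=
  ⨅ (S : Measure (Z × Z)) (_ : IsProbabilityMeasure S)
    (_ : S.map Prod.fst = μ) (_ : S.map Prod.snd = ν), ∫⁻ p, c p ∂S

open ProbabilityTheory

lemma wassersteinCost_le_coupling {Z : Type*} [MeasurableSpace Z]
    (c : Z × Z → ℝ≥0∞) {μ ν : Measure Z} (S : Measure (Z × Z))
    (h0 : IsProbabilityMeasure S) (h1 : S.map Prod.fst = μ) (h2 : S.map Prod.snd = ν) :
    wassersteinCost c μ ν ≤ ∫⁻ p, c p ∂S := by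
  refine iInf_le_of_le S ?_
  rw [iInf_pos h0, iInf_pos h1, iInf_pos h2]

section Aux

variable {X Y : Type*} [TopologicalSpace X] [PolishSpace X] [MeasurableSpace X] [BorelSpace X]
    [TopologicalSpace Y] [PolishSpace Y] [MeasurableSpace Y] [BorelSpace Y]

lemma graph_measurableSet (T : X → Y) (hT : Measurable T) :
    MeasurableSet {p : Y × X | T p.2 = p.1} := by
  have : {p : Y × X | T p.2 = p.1} = (fun p : Y × X => (T p.2, p.1)) ⁻¹' (Set.diagonal Y) := by
    ext p; simp [Set.diagonal]
  rw [this]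
  exact ((hT.comp measurable_snd).prodMk measurable_fst)
    (isClosed_diagonal.measurableSet)

/-- The conditional kernel of `a.map (fun x => (T x, x))` is a.e. supported on the fiber. -/
lemma condKernel_fiber [Nonempty X] (T : X → Y) (hT : Measurable T) (a : Measure X)
    [IsProbabilityMeasure a] :
    ∀ᵐ y ∂(a.map T),
      (a.map (fun x => (T x, x))).condKernel y {x | ¬ T x = y} = 0 := by
  have hpair : Measurable fun x => (T x, x) := hT.prodMk measurable_id
  set μa := a.map (fun x => (T x, x)) with hμa
  haveI : IsProbabilityMeasure μa := Measure.isProbabilityMeasure_map hpair.aemeasurable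
  have hfst : μa.fst = a.map T := by
    rw [Measure.fst, hμa, Measure.map_map measurable_fst hpair]
    rfl
  have hS : MeasurableSet {p : Y × X | T p.2 = p.1} := graph_measurableSet T hT
  have h0 : μa {p : Y × X | T p.2 = p.1}ᶜ = 0 := by
    rw [hμa, Measure.map_apply hpair hS.compl]
    have : (fun x => (T x, x)) ⁻¹' {p : Y × X | T p.2 = p.1}ᶜ = ∅ := by
      ext x; simp
    rw [this, measure_empty]
  rw [← μa.disintegrate μa.condKernel, Measure.compProd_apply hS.compl] at h0
  have hmeas : Measurable fun y => μa.condKernel y (Prod.mk y ⁻¹' {p : Y × X | T p.2 = p.1}ᶜ) :=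
    Kernel.measurable_kernel_prodMk_left hS.compl
  have h1 := (lintegral_eq_zero_iff hmeas).mp h0
  rw [← hfst]
  filter_upwards [h1] with y hy
  have : Prod.mk y ⁻¹' {p : Y × X | T p.2 = p.1}ᶜ = {x | ¬ T x = y} := rfl
  rw [this] at hy
  exact hy

end Aux

/-- for `T` (deterministic) measurable between Polish spaces,
`W(d)(T_# a, T_# b) = W(T̃d)(a, b)`. -/
theorem wassersteinCost_map_eq
    {X Y : Type*} [TopologicalSpace X] [PolishSpace X] [MeasurableSpace X] [BorelSpace X]
    [TopologicalSpace Y] [PolishSpace Y] [MeasurableSpace Y] [BorelSpace Y]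
    (T : X → Y) (hT : Measurable T)
    (d : Y × Y → ℝ≥0∞) (hd : Measurable d)
    (a b : Measure X) [IsProbabilityMeasure a] [IsProbabilityMeasure b] :
    wassersteinCost d (a.map T) (b.map T) =
      wassersteinCost (fun p => d (T p.1, T p.2)) a b := by
  haveI : Nonempty X := Measure.nonempty_of_neZero a
  have hTT : Measurable (Prod.map T T) := hT.prodMap hT
  have hpairT : Measurable fun x => (T x, x) := hT.prodMk measurable_id
  have hc : Measurable fun p : X × X => d (T p.1, T p.2) :=
    hd.comp ((hT.comp measurable_fst).prodMk (hT.comp measurable_snd))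
  apply le_antisymm
  · -- easy direction: push a coupling of (a, b) forward by T × T
    refine le_iInf fun S => le_iInf fun hS => le_iInf fun h1 => le_iInf fun h2 => ?_
    haveI := hS
    have hmap1 : (S.map (Prod.map T T)).map Prod.fst = a.map T := by
      rw [Measure.map_map measurable_fst hTT]
      have : (Prod.fst ∘ Prod.map T T : X × X → Y) = T ∘ Prod.fst := by
        ext p; simp
      rw [this, ← Measure.map_map hT measurable_fst, h1]
    have hmap2 : (S.map (Prod.map T T)).map Prod.snd = b.map T := by
      rw [Measure.map_map measurable_snd hTT]
      have : (Prod.snd ∘ Prod.map T T : X × X → Y) = T ∘ Prod.snd := by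
        ext p; simp
      rw [this, ← Measure.map_map hT measurable_snd, h2]
    calc wassersteinCost d (a.map T) (b.map T) ≤ ∫⁻ p, d p ∂(S.map (Prod.map T T)) :=
          wassersteinCost_le_coupling d _ (Measure.isProbabilityMeasure_map hTT.aemeasurable) hmap1 hmap2
      _ = ∫⁻ p, d (T p.1, T p.2) ∂S := by
          rw [lintegral_map hd hTT]
          exact lintegral_congr fun p => by rfl
  · -- hard direction: given a coupling Δ of (T_#a, T_#b), glue with conditional kernels
    refine le_iInf fun Δ => le_iInf fun hΔ => le_iInf fun h1 => le_iInf fun h2 => ?_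
    haveI := hΔ
    set μa := a.map (fun x => (T x, x)) with hμa
    set μb := b.map (fun x => (T x, x)) with hμb
    haveI : IsProbabilityMeasure μa := Measure.isProbabilityMeasure_map hpairT.aemeasurable
    haveI : IsProbabilityMeasure μb := Measure.isProbabilityMeasure_map hpairT.aemeasurable
    set κa := μa.condKernel with hκa
    set κb := μb.condKernel with hκb
    have hfsta : μa.fst = a.map T := by
      rw [Measure.fst, hμa, Measure.map_map measurable_fst hpairT]; rfl
    have hfstb : μb.fst = b.map T := by
      rw [Measure.fst, hμb, Measure.map_map measurable_fst hpairT]; rfl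
    set η : Kernel (Y × Y) (X × X) :=
      (κa.comap Prod.fst measurable_fst) ×ₖ (κb.comap Prod.snd measurable_snd) with hη
    haveI : IsMarkovKernel η := by
      rw [hη]; infer_instance
    have hηapp : ∀ q : Y × Y, η q = (κa q.1).prod (κb q.2) := by
      intro q
      rw [hη, Kernel.prod_apply, Kernel.comap_apply, Kernel.comap_apply]
    set P : Measure (X × X) := (Δ ⊗ₘ η).map Prod.snd with hP
    haveI : IsProbabilityMeasure (Δ ⊗ₘ η) := by infer_instance
    haveI : IsProbabilityMeasure P := Measure.isProbabilityMeasure_map measurable_snd.aemeasurable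
    -- first marginal of P is a
    have hm1 : P.map Prod.fst = a := by
      ext s hs
      rw [hP, Measure.map_map measurable_fst measurable_snd,
        Measure.map_apply (measurable_fst.comp measurable_snd) hs,
        Measure.compProd_apply ((measurable_fst.comp measurable_snd) hs)]
      have hpre : ∀ q : Y × Y,
          Prod.mk q ⁻¹' ((Prod.fst ∘ Prod.snd : (Y × Y) × X × X → X) ⁻¹' s)
            = s ×ˢ Set.univ := by
        intro q; ext p; simp
      calc ∫⁻ q, η q (Prod.mk q ⁻¹' ((Prod.fst ∘ Prod.snd : (Y × Y) × X × X → X) ⁻¹' s)) ∂Δ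
          = ∫⁻ q, κa q.1 s ∂Δ := by
            refine lintegral_congr fun q => ?_
            rw [hpre q, hηapp q, Measure.prod_prod, measure_univ, mul_one]
        _ = ∫⁻ y, κa y s ∂(Δ.map Prod.fst) := by
            rw [lintegral_map (Kernel.measurable_coe κa hs) measurable_fst]
        _ = ∫⁻ y, κa y s ∂μa.fst := by rw [h1, hfsta]
        _ = (μa.fst ⊗ₘ κa) (Set.univ ×ˢ s) := by
            rw [Measure.compProd_apply_prod MeasurableSet.univ hs]
            exact (setLIntegral_univ _).symm
        _ = μa (Set.univ ×ˢ s) := by rw [μa.disintegrate μa.condKernel]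
        _ = a s := by
            rw [hμa, Measure.map_apply hpairT (MeasurableSet.univ.prod hs)]
            congr 1; ext x; simp
    -- second marginal of P is b
    have hm2 : P.map Prod.snd = b := by
      ext s hs
      rw [hP, Measure.map_map measurable_snd measurable_snd,
        Measure.map_apply (measurable_snd.comp measurable_snd) hs,
        Measure.compProd_apply ((measurable_snd.comp measurable_snd) hs)]
      have hpre : ∀ q : Y × Y,
          Prod.mk q ⁻¹' ((Prod.snd ∘ Prod.snd : (Y × Y) × X × X → X) ⁻¹' s)
            = Set.univ ×ˢ s := by
        intro q; ext p; simp
      calc ∫⁻ q, η q (Prod.mk q ⁻¹' ((Prod.snd ∘ Prod.snd : (Y × Y) × X × X → X) ⁻¹' s)) ∂Δ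
          = ∫⁻ q, κb q.2 s ∂Δ := by
            refine lintegral_congr fun q => ?_
            rw [hpre q, hηapp q, Measure.prod_prod, measure_univ, one_mul]
        _ = ∫⁻ y, κb y s ∂(Δ.map Prod.snd) := by
            rw [lintegral_map (Kernel.measurable_coe κb hs) measurable_snd]
        _ = ∫⁻ y, κb y s ∂μb.fst := by rw [h2, hfstb]
        _ = (μb.fst ⊗ₘ κb) (Set.univ ×ˢ s) := by
            rw [Measure.compProd_apply_prod MeasurableSet.univ hs]
            exact (setLIntegral_univ _).symm
        _ = μb (Set.univ ×ˢ s) := by rw [μb.disintegrate μb.condKernel]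
        _ = b s := by
            rw [hμb, Measure.map_apply hpairT (MeasurableSet.univ.prod hs)]
            congr 1; ext x; simp
    -- the transport cost of P equals that of Δ
    have hker_a := condKernel_fiber T hT a
    have hker_b := condKernel_fiber T hT b
    rw [← h1] at hker_a
    rw [← h2] at hker_b
    have hSc : MeasurableSet {p : Y × X | T p.2 = p.1}ᶜ := (graph_measurableSet T hT).compl
    have hAa : ∀ᵐ q ∂Δ, κa q.1 {x | ¬ T x = q.1} = 0 := by
      have hmeasA : Measurable fun y => κa y {x | ¬ T x = y} :=
        Kernel.measurable_kernel_prodMk_left hSc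
      have : MeasurableSet {y | κa y {x | ¬ T x = y} = 0} :=
        hmeasA (measurableSet_singleton 0)
      exact (ae_map_iff measurable_fst.aemeasurable this).mp hker_a
    have hAb : ∀ᵐ q ∂Δ, κb q.2 {x | ¬ T x = q.2} = 0 := by
      have hmeasB : Measurable fun y => κb y {x | ¬ T x = y} :=
        Kernel.measurable_kernel_prodMk_left hSc
      have : MeasurableSet {y | κb y {x | ¬ T x = y} = 0} :=
        hmeasB (measurableSet_singleton 0)
      exact (ae_map_iff measurable_snd.aemeasurable this).mp hker_b
    have hcost : ∫⁻ p, d (T p.1, T p.2) ∂P = ∫⁻ p, d p ∂Δ := by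
      have hf : Measurable fun r : (Y × Y) × X × X => d (T r.2.1, T r.2.2) :=
        hd.comp ((hT.comp (measurable_fst.comp measurable_snd)).prodMk
          (hT.comp (measurable_snd.comp measurable_snd)))
      rw [hP, lintegral_map hc measurable_snd, Measure.lintegral_compProd hf]
      refine lintegral_congr_ae ?_
      filter_upwards [hAa, hAb] with q hqa hqb
      have haea : ∀ᵐ x ∂(κa q.1), T x = q.1 := by
        rw [ae_iff]; exact hqa
      have haeb : ∀ᵐ x ∂(κb q.2), T x = q.2 := by
        rw [ae_iff]; exact hqb
      rw [hηapp q, lintegral_prod _ hc.aemeasurable]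
      simp only
      calc ∫⁻ x, ∫⁻ x', d (T x, T x') ∂(κb q.2) ∂(κa q.1)
          = ∫⁻ _, d (q.1, q.2) ∂(κa q.1) := by
            refine lintegral_congr_ae ?_
            filter_upwards [haea] with x hx
            calc ∫⁻ x', d (T x, T x') ∂(κb q.2)
                = ∫⁻ _, d (q.1, q.2) ∂(κb q.2) := by
                  refine lintegral_congr_ae ?_
                  filter_upwards [haeb] with x' hx'
                  rw [hx, hx']
              _ = d (q.1, q.2) := by rw [lintegral_const, measure_univ, mul_one]
        _ = d (q.1, q.2) := by rw [lintegral_const, measure_univ, mul_one]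
        _ = d q := by rfl
    calc wassersteinCost (fun p => d (T p.1, T p.2)) a b
        ≤ ∫⁻ p, d (T p.1, T p.2) ∂P := wassersteinCost_le_coupling _ P inferInstance hm1 hm2
      _ = ∫⁻ p, d p ∂Δ := hcost
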